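/- Every m-th order complex tensor 𝒜 ∈ ℂ^{n₁×⋯×n_m} attains its largest U-eigenvalue: the function (z⁽¹⁾,…,z⁽ᵐ⁾) ↦ Re⟨𝒜, ⊗_{i=1}^m z⁽ⁱ⁾⟩ attains a maximum on the compact product of complex unit spheres, and the maximum value is a U-eigenvalue of 𝒜 which is ≥ |λ| for every U-eigenvalue λ. -/

import Mathlib

open Finset Complex

/-- Full Hermitian contraction of two complex tensors: `⟨A,B⟩ = Σ conj(A) * B`. -/
noncomputable def tinner {m : ℕ} {n : Fin m → ℕ} (A B : (∀ i : Fin m, Fin (n i)) → ℂ) : ℂ :=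
  ∑ idx : ∀ i : Fin m, Fin (n i), (starRingEnd ℂ) (A idx) * B idx

/-- The rank-one tensor `⊗ᵢ z⁽ⁱ⁾`. -/
noncomputable def otimes {m : ℕ} {n : Fin m → ℕ} (z : ∀ i : Fin m, Fin (n i) → ℂ) :
    (∀ i : Fin m, Fin (n i)) → ℂ :=
  fun idx => ∏ i, z i (idx i)

/-- `z` is a unit vector in `ℂ^k`. -/
def IsUnitVec {k : ℕ} (z : Fin k → ℂ) : Prop := ∑ j, Complex.normSq (z j) = 1

/-- The vector `⟨A, ⊗_{i≠k} z⁽ⁱ⁾⟩ ∈ ℂ^{n_k}`: contraction of `A` against all but the k-th vector. -/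
noncomputable def contraK {m : ℕ} {n : Fin m → ℕ} (A : (∀ i : Fin m, Fin (n i)) → ℂ)
    (z : ∀ i : Fin m, Fin (n i) → ℂ) (k : Fin m) (j : Fin (n k)) : ℂ :=
  ∑ idx : ∀ i : Fin m, Fin (n i),
    if idx k = j then (starRingEnd ℂ) (A idx) * ∏ i ∈ Finset.univ.erase k, z i (idx i) else 0

/-- `(lam, z)` is a U-eigenpair of `A`: all `z⁽ⁱ⁾` are unit vectors and
`⟨A, ⊗_{i≠k} z⁽ⁱ⁾⟩ = lam (z⁽ᵏ⁾)*` for every `k`. -/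
def IsUEigenpair {m : ℕ} {n : Fin m → ℕ} (A : (∀ i : Fin m, Fin (n i)) → ℂ) (lam : ℝ)
    (z : ∀ i : Fin m, Fin (n i) → ℂ) : Prop :=
  (∀ i, IsUnitVec (z i)) ∧ ∀ k : Fin m, ∀ j : Fin (n k),
    contraK A z k j = (lam : ℂ) * (starRingEnd ℂ) (z k j)

/-- `lam` is a U-eigenvalue of `A`. -/
def IsUEigenvalue {m : ℕ} {n : Fin m → ℕ} (A : (∀ i : Fin m, Fin (n i)) → ℂ) (lam : ℝ) : Prop :=
  ∃ z, IsUEigenpair A lam z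


section Aux
variable {m : ℕ} {n : Fin m → ℕ}

lemma expand_tinner (A : (∀ i : Fin m, Fin (n i)) → ℂ) (z : ∀ i : Fin m, Fin (n i) → ℂ)
    (k : Fin m) : tinner A (otimes z) = ∑ j, contraK A z k j * z k j := by
  unfold tinner otimes contraK
  simp_rw [Finset.sum_mul]
  rw [Finset.sum_comm]
  refine Finset.sum_congr rfl fun idx _ => ?_
  rw [Finset.sum_eq_single (idx k)]
  · rw [if_pos rfl, ← Finset.mul_prod_erase Finset.univ _ (Finset.mem_univ k)]
    ring
  · intro b _ hb
    rw [if_neg (fun h => hb h.symm), zero_mul]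
  · intro h; exact absurd (Finset.mem_univ _) h

lemma contraK_update (A : (∀ i : Fin m, Fin (n i)) → ℂ) (z : ∀ i : Fin m, Fin (n i) → ℂ)
    (k : Fin m) (w : Fin (n k) → ℂ) :
    contraK A (Function.update z k w) k = contraK A z k := by
  funext j
  unfold contraK
  refine Finset.sum_congr rfl fun idx _ => ?_
  congr 2
  refine Finset.prod_congr rfl fun i hi => ?_
  rw [Function.update_of_ne (Finset.ne_of_mem_erase hi)]

lemma contraK_flip (A : (∀ i : Fin m, Fin (n i)) → ℂ) (z : ∀ i : Fin m, Fin (n i) → ℂ)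
    (k₀ k : Fin m) (hk : k ≠ k₀) (j : Fin (n k)) :
    contraK A (Function.update z k₀ (-(z k₀))) k j = - contraK A z k j := by
  unfold contraK
  rw [← Finset.sum_neg_distrib]
  refine Finset.sum_congr rfl fun idx _ => ?_
  have hmem : k₀ ∈ Finset.univ.erase k := Finset.mem_erase.mpr ⟨Ne.symm hk, Finset.mem_univ _⟩
  have hprod : ∏ i ∈ Finset.univ.erase k, Function.update z k₀ (-(z k₀)) i (idx i)
      = - ∏ i ∈ Finset.univ.erase k, z i (idx i) := by
    rw [← Finset.mul_prod_erase _ _ hmem, ← Finset.mul_prod_erase _ (fun i => z i (idx i)) hmem]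
    rw [Function.update_self]
    rw [Finset.prod_congr rfl (fun i hi => by
      rw [Function.update_of_ne (Finset.ne_of_mem_erase hi)])]
    simp [neg_mul]
  split
  · rw [hprod]; ring
  · simp

end Aux

lemma key_cs {k' : ℕ} (lam : ℝ) (hlam : 0 ≤ lam) (c zz : Fin k' → ℂ)
    (hz : ∑ j, Complex.normSq (zz j) = 1)
    (hub : ∀ w : Fin k' → ℂ, (∑ j, Complex.normSq (w j) = 1) → (∑ j, c j * w j).re ≤ lam)
    (heq : (∑ j, c j * zz j).re = lam) :
    ∀ j, c j = (lam : ℂ) * (starRingEnd ℂ) (zz j) := by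
  set N := ∑ j, Complex.normSq (c j) with hN
  have hNnonneg : 0 ≤ N := Finset.sum_nonneg fun j _ => Complex.normSq_nonneg _
  have hNle : N ≤ lam ^ 2 := by
    rcases eq_or_lt_of_le hNnonneg with h0 | hpos
    · nlinarith
    · set s := Real.sqrt N with hs_def
      have hs : 0 < s := Real.sqrt_pos.mpr hpos
      have hs2 : s ^ 2 = N := Real.sq_sqrt hNnonneg
      have hw : ∑ j, Complex.normSq ((fun j => (starRingEnd ℂ) (c j) / (s : ℂ)) j) = 1 := by
        have : ∀ j, Complex.normSq ((starRingEnd ℂ) (c j) / (s : ℂ))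
            = Complex.normSq (c j) / s ^ 2 := by
          intro j
          rw [Complex.normSq_div, Complex.normSq_conj]
          norm_cast
          rw [Complex.normSq_ofReal]; ring_nf
        simp_rw [this, ← Finset.sum_div, ← hN, hs2, div_self (ne_of_gt hpos)]
      have hval : (∑ j, c j * ((starRingEnd ℂ) (c j) / (s : ℂ))).re = N / s := by
        have : ∀ j, c j * ((starRingEnd ℂ) (c j) / (s : ℂ))
            = ((Complex.normSq (c j) / s : ℝ) : ℂ) := by
          intro j
          rw [mul_div_assoc', Complex.mul_conj]
          push_cast; ring
        simp_rw [this]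
        rw [← Complex.ofReal_sum]
        rw [Complex.ofReal_re, ← Finset.sum_div, ← hN]
      have := hub _ hw
      rw [hval] at this
      have hsle : s ≤ lam := by
        rw [div_le_iff₀ hs] at this
        nlinarith
      nlinarith
  have hsum : ∑ j, Complex.normSq (c j - (lam : ℂ) * (starRingEnd ℂ) (zz j)) ≤ 0 := by
    have hterm : ∀ j, Complex.normSq (c j - (lam : ℂ) * (starRingEnd ℂ) (zz j))
        = Complex.normSq (c j) + lam ^ 2 * Complex.normSq (zz j)
          - 2 * lam * (c j * zz j).re := by
      intro j
      rw [Complex.normSq_sub]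
      rw [Complex.normSq_mul, Complex.normSq_conj, Complex.normSq_ofReal]
      have hconj : (starRingEnd ℂ) ((lam : ℂ) * (starRingEnd ℂ) (zz j)) = (lam : ℂ) * zz j := by
        rw [map_mul, Complex.conj_conj, Complex.conj_ofReal]
      rw [hconj, show c j * ((lam : ℂ) * zz j) = (lam : ℂ) * (c j * zz j) by ring,
        Complex.re_ofReal_mul]
      ring
    rw [Finset.sum_congr rfl fun j _ => hterm j]
    have e1 : ∑ j, (2 * lam * (c j * zz j).re) = 2 * lam * lam := by
      rw [← Finset.mul_sum, ← Complex.re_sum, heq]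
    rw [Finset.sum_sub_distrib, Finset.sum_add_distrib, e1, ← Finset.mul_sum, hz]
    nlinarith
  intro j
  have h0 : Complex.normSq (c j - (lam : ℂ) * (starRingEnd ℂ) (zz j)) = 0 := by
    have hge : 0 ≤ ∑ j, Complex.normSq (c j - (lam : ℂ) * (starRingEnd ℂ) (zz j)) :=
      Finset.sum_nonneg fun j _ => Complex.normSq_nonneg _
    have := (Finset.sum_eq_zero_iff_of_nonneg
      (fun j _ => Complex.normSq_nonneg (c j - (lam : ℂ) * (starRingEnd ℂ) (zz j)))).mp
      (le_antisymm hsum hge) j (Finset.mem_univ _)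
    exact this
  exact sub_eq_zero.mp (Complex.normSq_eq_zero.mp h0)

section Main
variable {m : ℕ} {n : Fin m → ℕ}

lemma unit_update {z : ∀ i : Fin m, Fin (n i) → ℂ} (hz : ∀ i, IsUnitVec (z i))
    {k : Fin m} {w : Fin (n k) → ℂ} (hw : IsUnitVec w) :
    ∀ i, IsUnitVec (Function.update z k w i) := by
  intro i
  rcases eq_or_ne i k with rfl | h
  · rwa [Function.update_self]
  · rw [Function.update_of_ne h]; exact hz i

lemma unit_neg {k' : ℕ} {w : Fin k' → ℂ} (hw : IsUnitVec w) : IsUnitVec (-w) := by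
  unfold IsUnitVec at *
  simpa [Complex.normSq_neg] using hw

lemma eigen_neg (hm : 0 < m) (A : (∀ i : Fin m, Fin (n i)) → ℂ) (mu : ℝ)
    (h : IsUEigenvalue A mu) : IsUEigenvalue A (-mu) := by
  obtain ⟨z, hzu, heig⟩ := h
  set k₀ : Fin m := ⟨0, hm⟩
  refine ⟨Function.update z k₀ (-(z k₀)), fun i => unit_update hzu (unit_neg (hzu k₀)) i, ?_⟩
  intro k j
  rcases eq_or_ne k k₀ with rfl | hk
  · rw [contraK_update, heig, Function.update_self]
    push_cast
    simp [mul_comm]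
  · rw [contraK_flip A z k₀ k hk, heig, Function.update_of_ne hk]
    push_cast
    ring

lemma eigen_mem (hm : 0 < m) (A : (∀ i : Fin m, Fin (n i)) → ℂ) (mu : ℝ)
    (h : IsUEigenvalue A mu) :
    mu ∈ {r : ℝ | ∃ z, (∀ i, IsUnitVec (z i)) ∧ r = (tinner A (otimes z)).re} := by
  obtain ⟨z, hzu, heig⟩ := h
  refine ⟨z, hzu, ?_⟩
  have : tinner A (otimes z) = (mu : ℂ) := by
    rw [expand_tinner A z ⟨0, hm⟩]
    have : ∀ j, contraK A z ⟨0, hm⟩ j * z ⟨0, hm⟩ j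
        = (mu : ℂ) * ((starRingEnd ℂ) (z ⟨0, hm⟩ j) * z ⟨0, hm⟩ j) := by
      intro j; rw [heig]; ring
    rw [Finset.sum_congr rfl fun j _ => this j, ← Finset.mul_sum]
    have : ∑ j, (starRingEnd ℂ) (z ⟨0, hm⟩ j) * z ⟨0, hm⟩ j = 1 := by
      have := hzu ⟨0, hm⟩
      unfold IsUnitVec at this
      calc ∑ j, (starRingEnd ℂ) (z ⟨0, hm⟩ j) * z ⟨0, hm⟩ j
          = ∑ j, ((Complex.normSq (z ⟨0, hm⟩ j) : ℝ) : ℂ) := by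
            refine Finset.sum_congr rfl fun j _ => ?_
            rw [mul_comm, Complex.mul_conj]
        _ = ((∑ j, Complex.normSq (z ⟨0, hm⟩ j) : ℝ) : ℂ) := by push_cast; ring
        _ = 1 := by rw [this]; norm_num
    rw [this, mul_one]
  rw [this, Complex.ofReal_re]

theorem exists_largest_UEigenvalue' {m : ℕ} {n : Fin m → ℕ} (hm : 0 < m)
    (hn : ∀ i, 0 < n i) (A : (∀ i : Fin m, Fin (n i)) → ℂ) :
    ∃ lam : ℝ,
      IsGreatest {r : ℝ | ∃ z, (∀ i, IsUnitVec (z i)) ∧ r = (tinner A (otimes z)).re} lam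
      ∧ IsUEigenvalue A lam
      ∧ ∀ mu : ℝ, IsUEigenvalue A mu → |mu| ≤ lam := by
  classical
  set S : Set (∀ i : Fin m, Fin (n i) → ℂ) := {z | ∀ i, IsUnitVec (z i)} with hS
  set f : (∀ i : Fin m, Fin (n i) → ℂ) → ℝ := fun z => (tinner A (otimes z)).re with hf
  -- continuity
  have hfc : Continuous f := by
    unfold f
    unfold tinner otimes
    exact Complex.continuous_re.comp (continuous_finset_sum _ fun idx _ =>
      continuous_const.mul (continuous_finset_prod _ fun i _ =>
        (continuous_apply (idx i)).comp (continuous_apply i)))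
  -- S compact
  have hclosed : IsClosed S := by
    have : S = ⋂ i, {z : ∀ i : Fin m, Fin (n i) → ℂ | ∑ j, Complex.normSq (z i j) = 1} := by
      ext z; simp [hS, Set.mem_iInter, IsUnitVec]
    rw [this]
    refine isClosed_iInter fun i => isClosed_eq ?_ continuous_const
    exact continuous_finset_sum _ fun j _ =>
      Complex.continuous_normSq.comp ((continuous_apply j).comp (continuous_apply i))
  have hbdd : Bornology.IsBounded S := by
    refine (Metric.isBounded_closedBall (x := (0 : ∀ i : Fin m, Fin (n i) → ℂ)) (r := 1)).subset
      fun z hz => ?_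
    rw [Metric.mem_closedBall, dist_zero_right]
    rw [pi_norm_le_iff_of_nonneg zero_le_one]
    intro i
    rw [pi_norm_le_iff_of_nonneg zero_le_one]
    intro j
    have h1 : Complex.normSq (z i j) ≤ 1 := by
      have := hz i
      unfold IsUnitVec at this
      calc Complex.normSq (z i j) ≤ ∑ j', Complex.normSq (z i j') :=
            Finset.single_le_sum (fun j' _ => Complex.normSq_nonneg _) (Finset.mem_univ j)
        _ = 1 := this
    have : ‖z i j‖ ^ 2 ≤ 1 := by rwa [Complex.sq_norm]
    nlinarith [norm_nonneg (z i j)]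
  have hScompact : IsCompact S := Metric.isCompact_of_isClosed_isBounded hclosed hbdd
  have hSne : S.Nonempty := by
    refine ⟨fun i j => if j = ⟨0, hn i⟩ then 1 else 0, fun i => ?_⟩
    unfold IsUnitVec
    rw [Finset.sum_congr rfl fun j _ => apply_ite Complex.normSq _ _ _]
    simp
  obtain ⟨z₀, hz₀S, hmax⟩ := hScompact.exists_isMaxOn hSne hfc.continuousOn
  set lam := f z₀ with hlam_def
  have hub : ∀ z ∈ S, f z ≤ lam := fun z hz => hmax hz
  -- lam ≥ 0
  set k₀ : Fin m := ⟨0, hm⟩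
  have hlam0 : 0 ≤ lam := by
    set z' := Function.update z₀ k₀ (-(z₀ k₀)) with hz'
    have hz'S : z' ∈ S := fun i => unit_update hz₀S (unit_neg (hz₀S k₀)) i
    have : f z' = -lam := by
      show (tinner A (otimes z')).re = -(tinner A (otimes z₀)).re
      rw [expand_tinner A z' k₀, expand_tinner A z₀ k₀]
      have : ∑ j, contraK A z' k₀ j * z' k₀ j = -∑ j, contraK A z₀ k₀ j * z₀ k₀ j := by
        rw [← Finset.sum_neg_distrib]
        refine Finset.sum_congr rfl fun j _ => ?_
        rw [hz', contraK_update, Function.update_self]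
        simp only [Pi.neg_apply]
        ring
      rw [this, Complex.neg_re]
    linarith [hub z' hz'S]
  -- eigenpair at z₀
  have heigen : IsUEigenpair A lam z₀ := by
    refine ⟨hz₀S, fun k j => ?_⟩
    have hkey := key_cs lam hlam0 (contraK A z₀ k) (z₀ k) (hz₀S k) ?_ ?_
    · exact hkey j
    · intro w hw
      have hz'S : Function.update z₀ k w ∈ S := fun i => unit_update hz₀S hw i
      have := hub _ hz'S
      have this2 : (tinner A (otimes (Function.update z₀ k w))).re ≤ lam := this
      rw [expand_tinner A _ k, contraK_update] at this2
      replace this := this2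
      simpa [Function.update_self] using this
    · exact (congrArg Complex.re (expand_tinner A z₀ k)).symm
  refine ⟨lam, ⟨⟨z₀, hz₀S, rfl⟩, ?_⟩, ⟨z₀, heigen⟩, ?_⟩
  · rintro r ⟨z, hz, rfl⟩
    exact hub z hz
  · intro mu hmu
    obtain ⟨z, hz, hzeq⟩ := eigen_mem hm A mu hmu
    have h1 : mu ≤ lam := hzeq ▸ hub z hz
    obtain ⟨z2, hz2, hzeq2⟩ := eigen_mem hm A (-mu) (eigen_neg hm A mu hmu)
    have h2 : -mu ≤ lam := hzeq2 ▸ hub z2 hz2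
    exact abs_le.mpr ⟨by linarith, h1⟩

end Main


/-- Every complex tensor attains its largest U-eigenvalue: `Re⟨A, ⊗z⁽ⁱ⁾⟩` attains a maximum
over the product of unit spheres, the maximum value is a U-eigenvalue of `A`, and it
dominates `|lam|` for every U-eigenvalue `lam`. -/
theorem exists_largest_UEigenvalue {m : ℕ} {n : Fin m → ℕ} (hm : 0 < m)
    (hn : ∀ i, 0 < n i) (A : (∀ i : Fin m, Fin (n i)) → ℂ) :
    ∃ lam : ℝ,
      IsGreatest {r : ℝ | ∃ z, (∀ i, IsUnitVec (z i)) ∧ r = (tinner A (otimes z)).re} lam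
      ∧ IsUEigenvalue A lam
      ∧ ∀ mu : ℝ, IsUEigenvalue A mu → |mu| ≤ lam := exists_largest_UEigenvalue' hm hn A
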